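/- For each n ∈ ℕ let ξ^{(n)} ∈ stdSimplex ℝ (Fin (n+1)) be given, let f_n(x)_j = x_j + x_{n+1}·ξ^{(n)}_j, and let Δ ⊆ Π_n (Fin (n+1) → ℝ) be the corresponding inverse limit with the product topology. Let e_n ∈ Δ be the unique element with f_{∞,m}(e_n) equal to the standard basis vector e_n^{(m)} for all m ≥ n. Then every extreme point of Δ lies in the topological closure of the set {e_n : n ∈ ℕ}; that is, {e_n : n ∈ ℕ} is dense in the extreme boundary of Δ. -/

import Mathlib

set_option maxHeartbeats 1000000

open Filter Set

section AuxStmt6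

variable (ξ : ∀ n : ℕ, Fin (n + 1) → ℝ)

private def Dset : Set (∀ n, Fin (n + 1) → ℝ) :=
  {x | (∀ n, x n ∈ stdSimplex ℝ (Fin (n + 1))) ∧
      ∀ n, ∀ j : Fin (n + 1),
        x (n + 1) j.castSucc + x (n + 1) (Fin.last (n + 1)) * ξ n j = x n j}

private lemma aux_det (x y : ∀ n, Fin (n + 1) → ℝ)
    (hx : ∀ n, ∀ j : Fin (n + 1), x (n + 1) j.castSucc + x (n + 1) (Fin.last (n + 1)) * ξ n j = x n j)
    (hy : ∀ n, ∀ j : Fin (n + 1), y (n + 1) j.castSucc + y (n + 1) (Fin.last (n + 1)) * ξ n j = y n j)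
    {L m : ℕ} (hLm : L ≤ m) (h : x m = y m) : x L = y L := by
  induction m, hLm using Nat.le_induction with
  | base => exact h
  | succ m hm ih =>
      apply ih
      funext j
      rw [← hx m j, ← hy m j, h]

private lemma aux_l1 (hξ : ∀ n, ξ n ∈ stdSimplex ℝ (Fin (n + 1)))
    (x y : ∀ n, Fin (n + 1) → ℝ)
    (hx : ∀ n, ∀ j : Fin (n + 1), x (n + 1) j.castSucc + x (n + 1) (Fin.last (n + 1)) * ξ n j = x n j)
    (hy : ∀ n, ∀ j : Fin (n + 1), y (n + 1) j.castSucc + y (n + 1) (Fin.last (n + 1)) * ξ n j = y n j)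
    {L m : ℕ} (hLm : L ≤ m) :
    ∑ i, |x L i - y L i| ≤ ∑ i, |x m i - y m i| := by
  induction m, hLm using Nat.le_induction with
  | base => exact le_refl _
  | succ m hm ih =>
      refine ih.trans ?_
      have key : ∀ j : Fin (m + 1), x m j - y m j =
          (x (m+1) j.castSucc - y (m+1) j.castSucc) +
          (x (m+1) (Fin.last (m+1)) - y (m+1) (Fin.last (m+1))) * ξ m j := by
        intro j
        rw [← hx m j, ← hy m j]; ring
      calc ∑ j : Fin (m+1), |x m j - y m j|
          ≤ ∑ j : Fin (m+1), (|x (m+1) j.castSucc - y (m+1) j.castSucc| +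
              |x (m+1) (Fin.last (m+1)) - y (m+1) (Fin.last (m+1))| * ξ m j) := by
            refine Finset.sum_le_sum fun j _ => ?_
            rw [key j]
            refine (abs_add_le _ _).trans ?_
            gcongr
            rw [abs_mul, abs_of_nonneg ((hξ m).1 j)]
        _ = ∑ j : Fin (m+1), |x (m+1) j.castSucc - y (m+1) j.castSucc| +
              |x (m+1) (Fin.last (m+1)) - y (m+1) (Fin.last (m+1))| := by
            rw [Finset.sum_add_distrib, ← Finset.mul_sum, (hξ m).2, mul_one]
        _ = ∑ i : Fin (m+2), |x (m+1) i - y (m+1) i| := (Fin.sum_univ_castSucc (fun i : Fin (m + 2) => |x (m+1) i - y (m+1) i|)).symm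

private lemma Dset_convex : Convex ℝ (Dset ξ) := by
  intro p hp q hq a b ha hb hab
  refine ⟨fun n => ?_, fun n j => ?_⟩
  · have : (a • p + b • q) n = a • p n + b • q n := by funext j; simp
    rw [this]
    exact convex_stdSimplex ℝ (Fin (n+1)) (hp.1 n) (hq.1 n) ha hb hab
  · have h1 := hp.2 n j
    have h2 := hq.2 n j
    simp only [Pi.add_apply, Pi.smul_apply, smul_eq_mul]
    linear_combination a * h1 + b * h2

private lemma Dset_isClosed : IsClosed (Dset ξ) := by
  have : Dset ξ = {x : ∀ n, Fin (n + 1) → ℝ | ∀ n, x n ∈ stdSimplex ℝ (Fin (n + 1))} ∩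
      ⋂ n, ⋂ j : Fin (n + 1), {x : ∀ n, Fin (n + 1) → ℝ |
        x (n + 1) j.castSucc + x (n + 1) (Fin.last (n + 1)) * ξ n j = x n j} := by
    ext x
    simp only [Dset, Set.mem_setOf_eq, Set.mem_inter_iff, Set.mem_iInter]
  rw [this]
  refine IsClosed.inter ?_ ?_
  · have : {x : ∀ n, Fin (n + 1) → ℝ | ∀ n, x n ∈ stdSimplex ℝ (Fin (n + 1))} =
        ⋂ n, (fun x : ∀ n, Fin (n + 1) → ℝ => x n) ⁻¹' stdSimplex ℝ (Fin (n + 1)) := by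
      ext x; simp
    rw [this]
    exact isClosed_iInter fun n => (isClosed_stdSimplex ℝ (Fin (n+1))).preimage (continuous_apply n)
  · refine isClosed_iInter fun n => isClosed_iInter fun j => isClosed_eq ?_ ?_
    · fun_prop
    · exact (continuous_apply j).comp (continuous_apply n)

private lemma Dset_isCompact : IsCompact (Dset ξ) := by
  have hc : IsCompact (Set.univ.pi fun n => stdSimplex ℝ (Fin (n + 1))) :=
    isCompact_univ_pi fun n => isCompact_stdSimplex ℝ (Fin (n+1))
  refine hc.of_isClosed_subset (Dset_isClosed ξ) ?_
  intro x hx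
  simp only [Set.mem_univ_pi]
  exact hx.1

private lemma aux_y (x : ∀ n, Fin (n + 1) → ℝ) (hx : x ∈ Dset ξ)
    (e : ∀ n : ℕ, ∀ m : ℕ, Fin (m + 1) → ℝ) (heΔ : ∀ n, e n ∈ Dset ξ)
    (he : ∀ n, ∀ m, n ≤ m → ∀ j : Fin (m + 1), e n m j = if (j : ℕ) = n then 1 else 0)
    (m : ℕ) :
    (∑ j : Fin (m+1), x m j • e (j:ℕ)) ∈ Dset ξ ∧
      ∀ L ≤ m, (∑ j : Fin (m+1), x m j • e (j:ℕ)) L = x L := by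
  have hmem : (∑ j : Fin (m+1), x m j • e (j:ℕ)) ∈ Dset ξ :=
    (Dset_convex ξ).sum_mem (fun j _ => (hx.1 m).1 j) (hx.1 m).2 (fun j _ => heΔ (j:ℕ))
  have htop : (∑ j : Fin (m+1), x m j • e (j:ℕ)) m = x m := by
    funext k
    rw [Finset.sum_apply, Finset.sum_apply]
    have : ∀ j : Fin (m+1), (x m j • e (j:ℕ)) m k = if k = j then x m j else 0 := by
      intro j
      rw [Pi.smul_apply, Pi.smul_apply, he (j:ℕ) m (Fin.is_le j) k, smul_eq_mul]
      rcases eq_or_ne k j with h | h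
      · simp [h]
      · rw [if_neg (fun hh => h (Fin.val_injective hh)), if_neg h, mul_zero]
    simp only [this]
    simp
  exact ⟨hmem, fun L hL => aux_det ξ _ x hmem.2 hx.2 hL htop⟩

private lemma aux_sep (hξ : ∀ n, ξ n ∈ stdSimplex ℝ (Fin (n + 1)))
    (x : ∀ n, Fin (n + 1) → ℝ) (hx : x ∈ Dset ξ)
    (e : ∀ n : ℕ, ∀ m : ℕ, Fin (m + 1) → ℝ) (heΔ : ∀ n, e n ∈ Dset ξ)
    (hnc : x ∉ closure (Set.range e)) :
    ∃ N : ℕ, ∃ δ : ℝ, 0 < δ ∧ ∀ n : ℕ, δ ≤ ∑ i : Fin (N+1), |e n N i - x N i| := by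
  rw [mem_closure_iff_nhds] at hnc
  push_neg at hnc
  obtain ⟨t, ht, hte⟩ := hnc
  rw [nhds_pi, Filter.mem_pi] at ht
  obtain ⟨I, hIfin, s, hs, hsub⟩ := ht
  have hchoice : ∀ L : ℕ, ∃ ε : ℝ, 0 < ε ∧ (L ∈ I → Metric.ball (x L) ε ⊆ s L) := by
    intro L
    obtain ⟨ε, hε, hb⟩ := Metric.mem_nhds_iff.1 (hs L)
    exact ⟨ε, hε, fun _ => hb⟩
  choose εf hεf hball using hchoice
  set J : Finset ℕ := hIfin.toFinset with hJ
  have hJI : ∀ L, L ∈ J ↔ L ∈ I := fun L => hIfin.mem_toFinset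
  set N : ℕ := J.sup id with hN
  have hLN : ∀ L ∈ I, L ≤ N := fun L hL => Finset.le_sup (f := id) ((hJI L).2 hL)
  -- find positive δ below all εf L for L ∈ I
  have hδ : ∃ δ : ℝ, 0 < δ ∧ ∀ L ∈ I, δ ≤ εf L := by
    rcases J.eq_empty_or_nonempty with hJe | hJne
    · exact ⟨1, one_pos, fun L hL => absurd ((hJI L).2 hL) (by simp [hJe])⟩
    · obtain ⟨L₀, hL₀, hinf⟩ := Finset.exists_mem_eq_inf' hJne εf
      exact ⟨J.inf' hJne εf, hinf ▸ hεf L₀, fun L hL => Finset.inf'_le εf ((hJI L).2 hL)⟩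
  obtain ⟨δ, hδpos, hδle⟩ := hδ
  refine ⟨N, δ, hδpos, fun n => ?_⟩
  by_contra hlt
  push_neg at hlt
  have hmem : e n ∈ I.pi s := by
    intro L hL
    apply hball L hL
    rw [Metric.mem_ball]
    rw [dist_pi_lt_iff (lt_of_lt_of_le hδpos (hδle L hL))]
    intro i
    rw [Real.dist_eq]
    calc |e n L i - x L i| ≤ ∑ i', |e n L i' - x L i'| :=
          Finset.single_le_sum (f := fun i' => |e n L i' - x L i'|) (fun i' _ => abs_nonneg _) (Finset.mem_univ i)
      _ ≤ ∑ i', |e n N i' - x N i'| := aux_l1 ξ hξ (e n) x (heΔ n).2 hx.2 (hLN L hL)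
      _ < δ := hlt
      _ ≤ εf L := hδle L hL
  have : e n ∈ t ∩ Set.range e := ⟨hsub hmem, ⟨n, rfl⟩⟩
  rw [hte] at this
  exact this

private lemma coord_le_one {k : ℕ} {f : Fin (k+1) → ℝ}
    (hf : f ∈ stdSimplex ℝ (Fin (k+1))) (j : Fin (k+1)) : f j ≤ 1 := by
  rw [← hf.2]
  exact Finset.single_le_sum (fun i _ => hf.1 i) (Finset.mem_univ j)

private lemma aux_split (x : ∀ n, Fin (n + 1) → ℝ) (hx : x ∈ Dset ξ)
    (e : ∀ n : ℕ, ∀ m : ℕ, Fin (m + 1) → ℝ) (heΔ : ∀ n, e n ∈ Dset ξ)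
    (he : ∀ n, ∀ m, n ≤ m → ∀ j : Fin (m + 1), e n m j = if (j : ℕ) = n then 1 else 0)
    (N : ℕ) (i : Fin (N+1)) {m : ℕ} (hm : N ≤ m) {θ : ℝ} (hθ : 0 < θ)
    (hP : θ ≤ ∑ j : Fin (m+1), x m j * |e (j:ℕ) N i - x N i|) :
    ∃ (a : ℝ) (u v : ∀ n, Fin (n+1) → ℝ), u ∈ Dset ξ ∧ v ∈ Dset ξ ∧
      θ/2 ≤ a ∧ a ≤ 1 - θ/2 ∧ θ ≤ u N i - v N i ∧
      ∀ L ≤ m, a • u L + (1 - a) • v L = x L := by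
  classical
  set w : Fin (m+1) → ℝ := x m with hw
  set p : Fin (m+1) → ℝ := fun j => e (j:ℕ) N i with hp
  set c : ℝ := x N i with hc
  have hw0 : ∀ j, 0 ≤ w j := (hx.1 m).1
  have hw1 : ∑ j, w j = 1 := (hx.1 m).2
  have hp0 : ∀ j, 0 ≤ p j := fun j => ((heΔ (j:ℕ)).1 N).1 i
  have hp1 : ∀ j, p j ≤ 1 := fun j => coord_le_one ((heΔ (j:ℕ)).1 N) i
  have hc0 : 0 ≤ c := (hx.1 N).1 i
  have hc1 : c ≤ 1 := coord_le_one (hx.1 N) i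
  set S : Finset (Fin (m+1)) := Finset.univ.filter (fun j => c ≤ p j) with hS
  set T : Finset (Fin (m+1)) := Finset.univ.filter (fun j => ¬ (c ≤ p j)) with hT
  set α : ℝ := ∑ j ∈ S, w j with hα
  set Dp : ℝ := ∑ j ∈ S, w j * (p j - c) with hDp
  set Dm : ℝ := ∑ j ∈ T, w j * (c - p j) with hDm
  obtain ⟨hymem, hyL⟩ := aux_y ξ x hx e heΔ he m
  -- ∑ w p = c
  have hzero : ∑ j, w j * p j = c := by
    have h1 := congrFun (hyL N hm) i
    have h2 : (∑ j : Fin (m+1), w j • e (j:ℕ)) N i = ∑ j, w j * p j := by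
      rw [Finset.sum_apply, Finset.sum_apply]
      rfl
    rw [h2] at h1
    exact h1
  have htotal : ∑ j, w j * (p j - c) = 0 := by
    have : ∑ j, w j * (p j - c) = (∑ j, w j * p j) - (∑ j, w j) * c := by
      rw [Finset.sum_mul, ← Finset.sum_sub_distrib]
      exact Finset.sum_congr rfl fun j _ => by ring
    rw [this, hzero, hw1, one_mul, sub_self]
  have hsplit_wpc : Dp + ∑ j ∈ T, w j * (p j - c) = 0 := by
    rw [hDp, hT, hS, Finset.sum_filter_add_sum_filter_not]
    exact htotal
  have hnegT : ∑ j ∈ T, w j * (p j - c) = -Dm := by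
    rw [hDm, ← Finset.sum_neg_distrib]
    exact Finset.sum_congr rfl fun j _ => by ring
  have hDpm : Dp = Dm := by rw [hnegT] at hsplit_wpc; linarith
  have habs : θ ≤ Dp + Dm := by
    have key : ∑ j, w j * |p j - c| = Dp + Dm := by
      rw [← Finset.sum_filter_add_sum_filter_not Finset.univ (fun j => c ≤ p j)
        (fun j => w j * |p j - c|)]
      congr 1
      · exact Finset.sum_congr rfl fun j hj => by
          rw [abs_of_nonneg (sub_nonneg.2 (Finset.mem_filter.1 hj).2)]
      · exact Finset.sum_congr rfl fun j hj => by
          have h := (Finset.mem_filter.1 hj).2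
          rw [abs_of_neg (sub_neg.2 (not_le.1 h))]
          ring
    rw [← key]
    exact hP
  have hDp2 : θ/2 ≤ Dp := by linarith
  have hDm2 : θ/2 ≤ Dm := by linarith
  have hDpα : Dp ≤ α := by
    refine Finset.sum_le_sum fun j hj => ?_
    nlinarith [hw0 j, hp1 j, hc0]
  have hsum_w : α + ∑ j ∈ T, w j = 1 := by
    rw [hα, hT, hS, Finset.sum_filter_add_sum_filter_not]
    exact hw1
  have hDmT : Dm ≤ ∑ j ∈ T, w j := by
    refine Finset.sum_le_sum fun j hj => ?_
    nlinarith [hw0 j, hp0 j, hc1]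
  have hαlow : θ/2 ≤ α := le_trans hDp2 hDpα
  have hαhigh : α ≤ 1 - θ/2 := by linarith
  have hα0 : 0 < α := lt_of_lt_of_le (by linarith) hαlow
  have hα0' : α ≠ 0 := ne_of_gt hα0
  have h1α0 : 0 < 1 - α := by linarith
  have h1α0' : (1:ℝ) - α ≠ 0 := ne_of_gt h1α0
  have hα1 : α ≤ 1 := by linarith
  set u : ∀ n, Fin (n+1) → ℝ := α⁻¹ • ∑ j ∈ S, w j • e (j:ℕ) with hu
  set v : ∀ n, Fin (n+1) → ℝ := (1-α)⁻¹ • ∑ j ∈ T, w j • e (j:ℕ) with hv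
  have huD : u ∈ Dset ξ := by
    have heq : u = ∑ j ∈ S, (α⁻¹ * w j) • e (j:ℕ) := by
      rw [hu, Finset.smul_sum]
      exact Finset.sum_congr rfl fun j _ => (smul_smul _ _ _)
    rw [heq]
    refine (Dset_convex ξ).sum_mem (fun j _ => mul_nonneg (inv_nonneg.2 hα0.le) (hw0 j)) ?_
      (fun j _ => heΔ (j:ℕ))
    rw [← Finset.mul_sum, ← hα, inv_mul_cancel₀ hα0']
  have hvD : v ∈ Dset ξ := by
    have heq : v = ∑ j ∈ T, ((1-α)⁻¹ * w j) • e (j:ℕ) := by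
      rw [hv, Finset.smul_sum]
      exact Finset.sum_congr rfl fun j _ => (smul_smul _ _ _)
    rw [heq]
    refine (Dset_convex ξ).sum_mem (fun j _ => mul_nonneg (inv_nonneg.2 h1α0.le) (hw0 j)) ?_
      (fun j _ => heΔ (j:ℕ))
    rw [← Finset.mul_sum]
    have hTsum : ∑ j ∈ T, w j = 1 - α := by linarith
    rw [hTsum, inv_mul_cancel₀ h1α0']
  have hdecomp0 : α • u + (1-α) • v = ∑ j : Fin (m+1), w j • e (j:ℕ) := by
    rw [hu, hv, smul_inv_smul₀ hα0', smul_inv_smul₀ h1α0', hS, hT]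
    exact Finset.sum_filter_add_sum_filter_not Finset.univ _ _
  refine ⟨α, u, v, huD, hvD, hαlow, hαhigh, ?_, ?_⟩
  · -- separation
    have huNi : u N i = α⁻¹ * (Dp + c * α) := by
      have e1 : u N i = α⁻¹ * ∑ j ∈ S, w j * p j := by
        rw [hu, Pi.smul_apply, Pi.smul_apply, Finset.sum_apply, Finset.sum_apply, smul_eq_mul]
        rfl
      have e2 : ∑ j ∈ S, w j * p j = Dp + c * α := by
        rw [hDp, hα, Finset.mul_sum, ← Finset.sum_add_distrib]
        exact Finset.sum_congr rfl fun j _ => by ring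
      rw [e1, e2]
    have hvNi : v N i = (1-α)⁻¹ * (c * (∑ j ∈ T, w j) - Dm) := by
      have e1 : v N i = (1-α)⁻¹ * ∑ j ∈ T, w j * p j := by
        rw [hv, Pi.smul_apply, Pi.smul_apply, Finset.sum_apply, Finset.sum_apply, smul_eq_mul]
        rfl
      have e2 : ∑ j ∈ T, w j * p j = c * (∑ j ∈ T, w j) - Dm := by
        rw [hDm, Finset.mul_sum, ← Finset.sum_sub_distrib]
        exact Finset.sum_congr rfl fun j _ => by ring
      rw [e1, e2]
    have hTsum : ∑ j ∈ T, w j = 1 - α := by linarith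
    have hinv1 : 1 ≤ α⁻¹ := one_le_inv_iff₀.2 ⟨hα0, hα1⟩
    have hinv2 : 1 ≤ (1-α)⁻¹ := one_le_inv_iff₀.2 ⟨h1α0, by linarith⟩
    have h1 : c + Dp ≤ u N i := by
      rw [huNi]
      nlinarith [mul_inv_cancel₀ hα0', hDp2, hθ]
    have h2 : v N i ≤ c - Dm := by
      rw [hvNi, hTsum]
      nlinarith [mul_inv_cancel₀ h1α0', hDm2, hθ]
    linarith
  · intro L hL
    calc α • u L + (1 - α) • v L = (α • u + (1-α) • v) L := by rw [Pi.add_apply, Pi.smul_apply, Pi.smul_apply]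
      _ = (∑ j : Fin (m+1), w j • e (j:ℕ)) L := by rw [hdecomp0]
      _ = x L := hyL L hL

theorem stmt_6' (hξ : ∀ n, ξ n ∈ stdSimplex ℝ (Fin (n + 1)))
    (e : ∀ n : ℕ, ∀ m : ℕ, Fin (m + 1) → ℝ)
    (heΔ : ∀ n, e n ∈ Dset ξ)
    (he : ∀ n, ∀ m, n ≤ m → ∀ j : Fin (m + 1), e n m j = if (j : ℕ) = n then 1 else 0) :
    (Dset ξ).extremePoints ℝ ⊆ closure (Set.range e) := by
  classical
  intro x hx
  by_contra hnc
  have hxD : x ∈ Dset ξ := hx.1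
  obtain ⟨N, δ, hδ, hsep⟩ := aux_sep ξ hξ x hxD e heΔ hnc
  set θ : ℝ := δ / (N + 1) with hθdef
  have hθ : 0 < θ := div_pos hδ (by positivity)
  -- pigeonhole: for each m ≥ N some coordinate i carries mass θ
  have key : ∀ m : ℕ, N ≤ m →
      ∃ i : Fin (N+1), θ ≤ ∑ j : Fin (m+1), x m j * |e (j:ℕ) N i - x N i| := by
    intro m hm
    by_contra hcon
    push_neg at hcon
    have hw0 : ∀ j, 0 ≤ x m j := (hxD.1 m).1
    have hw1 : ∑ j, x m j = 1 := (hxD.1 m).2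
    have h1 : δ ≤ ∑ j : Fin (m+1), x m j * ∑ i : Fin (N+1), |e (j:ℕ) N i - x N i| := by
      calc δ = ∑ j : Fin (m+1), x m j * δ := by rw [← Finset.sum_mul, hw1, one_mul]
        _ ≤ _ := Finset.sum_le_sum fun j _ =>
            mul_le_mul_of_nonneg_left (hsep (j:ℕ)) (hw0 j)
    have h2 : ∑ j : Fin (m+1), x m j * ∑ i : Fin (N+1), |e (j:ℕ) N i - x N i|
        = ∑ i : Fin (N+1), ∑ j : Fin (m+1), x m j * |e (j:ℕ) N i - x N i| := by
      rw [Finset.sum_comm]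
      exact Finset.sum_congr rfl fun j _ => Finset.mul_sum _ _ _
    have h3 : ∑ i : Fin (N+1), ∑ j : Fin (m+1), x m j * |e (j:ℕ) N i - x N i|
        < ∑ _i : Fin (N+1), θ :=
      Finset.sum_lt_sum_of_nonempty Finset.univ_nonempty fun i _ => hcon i
    have h4 : ∑ _i : Fin (N+1), θ = δ := by
      rw [Finset.sum_const, Finset.card_univ, Fintype.card_fin, nsmul_eq_mul, hθdef]
      push_cast
      field_simp
    rw [h2] at h1
    rw [h4] at h3
    linarith
  -- choose i_m and pigeonhole over the finitely many i
  have key' : ∀ m : ℕ, ∃ i : Fin (N+1),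
      N ≤ m → θ ≤ ∑ j : Fin (m+1), x m j * |e (j:ℕ) N i - x N i| := by
    intro m
    by_cases hm : N ≤ m
    · obtain ⟨i, hi⟩ := key m hm
      exact ⟨i, fun _ => hi⟩
    · exact ⟨0, fun h => absurd h hm⟩
  choose If hIf using key'
  have hinf : ∃ i : Fin (N+1), {m : ℕ | N ≤ m ∧ If m = i}.Infinite := by
    by_contra hfin
    push_neg at hfin
    have hsub : Set.Ici N ⊆ ⋃ i : Fin (N+1), {m : ℕ | N ≤ m ∧ If m = i} :=
      fun m hm => Set.mem_iUnion.2 ⟨If m, hm, rfl⟩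
    exact (Set.Ici_infinite N) ((Set.finite_iUnion hfin).subset hsub)
  obtain ⟨i, hGinf⟩ := hinf
  set G : Set ℕ := {m : ℕ | N ≤ m ∧ If m = i} with hG
  -- per m ∈ G, get the splitting data
  have hsplitm : ∀ m ∈ G, ∃ (a : ℝ) (u v : ∀ n, Fin (n+1) → ℝ),
      u ∈ Dset ξ ∧ v ∈ Dset ξ ∧ θ/2 ≤ a ∧ a ≤ 1 - θ/2 ∧ θ ≤ u N i - v N i ∧
      ∀ L ≤ m, a • u L + (1 - a) • v L = x L := by
    intro m hm
    have h1 : θ ≤ ∑ j : Fin (m+1), x m j * |e (j:ℕ) N i - x N i| := by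
      have := hIf m hm.1
      rwa [hm.2] at this
    exact aux_split ξ x hxD e heΔ he N i hm.1 hθ h1
  -- choose the data
  have hsplitm' : ∀ m : ℕ, ∃ (a : ℝ) (u v : ∀ n, Fin (n+1) → ℝ),
      m ∈ G → (u ∈ Dset ξ ∧ v ∈ Dset ξ ∧ θ/2 ≤ a ∧ a ≤ 1 - θ/2 ∧ θ ≤ u N i - v N i ∧
      ∀ L ≤ m, a • u L + (1 - a) • v L = x L) := by
    intro m
    by_cases hm : m ∈ G
    · obtain ⟨a, u, v, h⟩ := hsplitm m hm
      exact ⟨a, u, v, fun _ => h⟩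
    · exact ⟨0, x, x, fun h => absurd h hm⟩
  choose af uf vf hdata using hsplitm'
  -- cluster point argument
  have hFne : (atTop ⊓ 𝓟 G).NeBot :=
    frequently_mem_iff_neBot.1 (Nat.frequently_atTop_iff_infinite.2 hGinf)
  have hGF : G ∈ atTop ⊓ 𝓟 G := (inf_le_right : atTop ⊓ 𝓟 G ≤ 𝓟 G) (mem_principal_self G)
  have hmemF : ∀ (C : Set (ℝ × (∀ n : ℕ, Fin (n + 1) → ℝ) × (∀ n : ℕ, Fin (n + 1) → ℝ))),
      {m : ℕ | (af m, uf m, vf m) ∈ C} ∈ atTop ⊓ 𝓟 G →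
      map (fun m => (af m, uf m, vf m)) (atTop ⊓ 𝓟 G) ≤ 𝓟 C :=
    fun C hC => le_principal_iff.2 (mem_map.2 hC)
  have hKcomp : IsCompact (Set.Icc (θ/2) (1 - θ/2) ×ˢ (Dset ξ ×ˢ Dset ξ)) :=
    isCompact_Icc.prod ((Dset_isCompact ξ).prod (Dset_isCompact ξ))
  have hKmem : {m : ℕ | (af m, uf m, vf m) ∈
      Set.Icc (θ/2) (1 - θ/2) ×ˢ (Dset ξ ×ˢ Dset ξ)} ∈ atTop ⊓ 𝓟 G := by
    refine mem_of_superset hGF fun m hm => ?_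
    obtain ⟨hu, hv, ha1, ha2, _, _⟩ := hdata m hm
    exact ⟨⟨ha1, ha2⟩, hu, hv⟩
  haveI : (map (fun m => (af m, uf m, vf m)) (atTop ⊓ 𝓟 G)).NeBot := map_neBot
  obtain ⟨z, hzK, hz⟩ := hKcomp.exists_clusterPt (hmemF _ hKmem)
  have htrans : ∀ (C : Set (ℝ × (∀ n : ℕ, Fin (n + 1) → ℝ) × (∀ n : ℕ, Fin (n + 1) → ℝ))),
      IsClosed C → {m : ℕ | (af m, uf m, vf m) ∈ C} ∈ atTop ⊓ 𝓟 G → z ∈ C := by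
    intro C hC hmem
    have : ClusterPt z (𝓟 C) := hz.mono (hmemF C hmem)
    rw [← hC.closure_eq]
    exact mem_closure_iff_clusterPt.2 this
  -- separation condition
  have hsepz : θ ≤ z.2.1 N i - z.2.2 N i := by
    refine htrans {w | θ ≤ w.2.1 N i - w.2.2 N i} ?_ ?_
    · apply isClosed_le continuous_const
      fun_prop
    · refine mem_of_superset hGF fun m hm => ?_
      exact (hdata m hm).2.2.2.2.1
  -- decomposition conditions
  have hdecz : ∀ L : ℕ, z.1 • z.2.1 L + (1 - z.1) • z.2.2 L = x L := by
    intro L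
    refine htrans {w | w.1 • w.2.1 L + (1 - w.1) • w.2.2 L = x L} ?_ ?_
    · apply isClosed_eq ?_ continuous_const
      exact (continuous_fst.smul ((continuous_apply L).comp
          (continuous_fst.comp continuous_snd))).add
        ((continuous_const.sub continuous_fst).smul ((continuous_apply L).comp
          (continuous_snd.comp continuous_snd)))
    · have hL : {m : ℕ | L ≤ m} ∈ atTop ⊓ 𝓟 G := (inf_le_left : atTop ⊓ 𝓟 G ≤ atTop) (mem_atTop L)
      refine mem_of_superset (inter_mem hGF hL) fun m hm => ?_
      exact (hdata m hm.1).2.2.2.2.2 L hm.2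
  have ha1 : θ/2 ≤ z.1 := hzK.1.1
  have ha2 : z.1 ≤ 1 - θ/2 := hzK.1.2
  have huD : z.2.1 ∈ Dset ξ := hzK.2.1
  have hvD : z.2.2 ∈ Dset ξ := hzK.2.2
  have hxeq : z.1 • z.2.1 + (1 - z.1) • z.2.2 = x := by
    funext L
    exact hdecz L
  have hseg : x ∈ openSegment ℝ z.2.1 z.2.2 :=
    ⟨z.1, 1 - z.1, by linarith, by linarith, by ring, hxeq⟩
  obtain ⟨hux, hvx⟩ := (mem_extremePoints.1 hx).2 _ huD _ hvD hseg
  rw [hux, hvx] at hsepz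
  simp only [sub_self] at hsepz
  linarith

end AuxStmt6

/-- In the inverse limit `Δ` of the standard simplices along the affine maps
`f_n(x)_j = x_j + x_{n+1}·ξ^{(n)}_j`, the elements `e_n` (whose `m`-th coordinate is the `n`-th
standard basis vector for all `m ≥ n`) are dense in the extreme boundary of `Δ`: every extreme
point of `Δ` lies in the closure of `{e_n : n ∈ ℕ}` (product topology). -/
theorem stmt_6 (ξ : ∀ n : ℕ, Fin (n + 1) → ℝ)
    (hξ : ∀ n, ξ n ∈ stdSimplex ℝ (Fin (n + 1)))
    (Δ : Set (∀ n, Fin (n + 1) → ℝ))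
    (hΔ : Δ = {x | (∀ n, x n ∈ stdSimplex ℝ (Fin (n + 1))) ∧
      ∀ n, ∀ j : Fin (n + 1),
        x (n + 1) j.castSucc + x (n + 1) (Fin.last (n + 1)) * ξ n j = x n j})
    (e : ∀ n : ℕ, ∀ m : ℕ, Fin (m + 1) → ℝ)
    (heΔ : ∀ n, e n ∈ Δ)
    (he : ∀ n, ∀ m, n ≤ m → ∀ j : Fin (m + 1), e n m j = if (j : ℕ) = n then 1 else 0) :
    Δ.extremePoints ℝ ⊆ closure (Set.range e) := by
  have hD : Δ = Dset ξ := hΔ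
  rw [hD] at heΔ ⊢
  exact stmt_6' ξ hξ e heΔ he
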